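/- (Clean pairs dominate the noisy-pair robust loss.) Let q be a nonzero vector in a finite-dimensional real inner product space with q̃ = q/‖q‖, and let k_j, k_m be unit vectors (a clean pair and a noisy pair respectively) satisfying ⟨q̃, k_m⟩ < ⟨q̃, k_j⟩ < 1. Writing L̃_r(q; k) = 2√(1 − ⟨q̃, k⟩), the gradient with respect to q of the noisy-pair loss is strictly smaller in norm than that of the clean-pair loss: ‖∇_q L̃_r(q; k_m)‖² = (1/‖q‖²)(1 + ⟨q̃, k_m⟩) < (1/‖q‖²)(1 + ⟨q̃, k_j⟩) = ‖∇_q L̃_r(q; k_j)‖². -/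
import Mathlib


open scoped RealInnerProductSpace

open scoped RealInnerProductSpace
open InnerProductSpace

section Aux
variable {E : Type*} [NormedAddCommGroup E] [InnerProductSpace ℝ E] [FiniteDimensional ℝ E]

omit [FiniteDimensional ℝ E] in
lemma aux_norm_fderiv (q : E) (hq : q ≠ 0) :
    HasFDerivAt (fun p : E => ‖p‖) (‖q‖⁻¹ • innerSL ℝ q) q := by
  have h0 : ‖q‖ ≠ 0 := norm_ne_zero_iff.mpr hq
  have hn : HasFDerivAt (fun p : E => ‖p‖ ^ 2) (2 • innerSL ℝ q) q :=
    (hasStrictFDerivAt_norm_sq q).hasFDerivAt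
  have h := hn.sqrt (pow_ne_zero 2 h0)
  have hfun : (fun p : E => Real.sqrt (‖p‖ ^ 2)) = fun p : E => ‖p‖ := by
    funext p; exact Real.sqrt_sq (norm_nonneg p)
  rw [hfun] at h
  convert h using 1
  ext y
  simp only [ContinuousLinearMap.smul_apply, smul_eq_mul]
  rw [Real.sqrt_sq (norm_nonneg q)]
  push_cast
  ring_nf

lemma aux_grad (q k : E) (hq : q ≠ 0) (hc : ⟪‖q‖⁻¹ • q, k⟫ < 1) :
    HasGradientAt (fun p : E => 2 * Real.sqrt (1 - ⟪‖p‖⁻¹ • p, k⟫))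
      ((Real.sqrt (1 - ⟪‖q‖⁻¹ • q, k⟫))⁻¹ •
        ((⟪q, k⟫ * (‖q‖ ^ 3)⁻¹) • q - ‖q‖⁻¹ • k)) q := by
  have h0 : ‖q‖ ≠ 0 := norm_ne_zero_iff.mpr hq
  have hcc : ⟪‖q‖⁻¹ • q, k⟫ = ‖q‖⁻¹ * ⟪q, k⟫ := real_inner_smul_left q k _
  have hpos : 0 < 1 - ⟪‖q‖⁻¹ • q, k⟫ := by linarith
  have hinv : HasFDerivAt (fun p : E => ‖p‖⁻¹)
      ((-(‖q‖ ^ 2)⁻¹) • (‖q‖⁻¹ • innerSL ℝ q)) q :=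
    (hasDerivAt_inv h0).comp_hasFDerivAt q (aux_norm_fderiv q hq)
  have hv : HasFDerivAt (fun p : E => ⟪p, k⟫) (innerSL ℝ k) q := by
    have : (fun p : E => ⟪p, k⟫) = fun p : E => (innerSL ℝ k) p := by
      funext p; simp [real_inner_comm]
    rw [this]
    exact (innerSL ℝ k).hasFDerivAt
  have hmul := hinv.mul hv
  have hg : HasFDerivAt (fun p : E => 1 - ⟪‖p‖⁻¹ • p, k⟫)
      (-(‖q‖⁻¹ • innerSL ℝ k + ⟪q, k⟫ • ((-(‖q‖ ^ 2)⁻¹) • (‖q‖⁻¹ • innerSL ℝ q)))) q := by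
    have h' := hmul.const_sub 1
    have : (fun p : E => 1 - ⟪‖p‖⁻¹ • p, k⟫) = fun p : E => 1 - ‖p‖⁻¹ * ⟪p, k⟫ := by
      funext p; rw [real_inner_smul_left]
    rw [this]
    exact h'
  have hne : (1 : ℝ) - ⟪‖q‖⁻¹ • q, k⟫ ≠ 0 := ne_of_gt hpos
  have hf := (hg.sqrt hne).const_mul 2
  rw [hasGradientAt_iff_hasFDerivAt]
  refine hf.congr_fderiv ?_
  have hsne : Real.sqrt (1 - ⟪‖q‖⁻¹ • q, k⟫) ≠ 0 := by
    positivity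
  ext y
  simp only [ContinuousLinearMap.smul_apply, ContinuousLinearMap.coe_smul', Pi.smul_apply,
    ContinuousLinearMap.neg_apply, ContinuousLinearMap.add_apply, smul_eq_mul,
    toDual_apply_apply, InnerProductSpace.toDual_apply_apply, innerSL_apply_apply]
  simp only [real_inner_smul_left, inner_sub_left, map_inv₀, starRingEnd_apply, star_trivial]
  field_simp
  ring
end Aux

section Aux2
variable {E : Type*} [NormedAddCommGroup E] [InnerProductSpace ℝ E] [FiniteDimensional ℝ E]

lemma aux_norm_sq (q k : E) (hq : q ≠ 0) (hk : ‖k‖ = 1) (hc : ⟪‖q‖⁻¹ • q, k⟫ < 1) :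
    ‖gradient (fun p : E => 2 * Real.sqrt (1 - ⟪‖p‖⁻¹ • p, k⟫)) q‖ ^ 2
      = 1 / ‖q‖ ^ 2 * (1 + ⟪‖q‖⁻¹ • q, k⟫) := by
  have h0 : (0:ℝ) < ‖q‖ := norm_pos_iff.mpr hq
  have hcc : ⟪‖q‖⁻¹ • q, k⟫ = ‖q‖⁻¹ * ⟪q, k⟫ := real_inner_smul_left q k _
  have hpos : 0 < 1 - ⟪‖q‖⁻¹ • q, k⟫ := by linarith
  have hs : Real.sqrt (1 - ⟪‖q‖⁻¹ • q, k⟫) ^ 2 = 1 - ⟪‖q‖⁻¹ • q, k⟫ :=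
    Real.sq_sqrt (le_of_lt hpos)
  have hsne : Real.sqrt (1 - ⟪‖q‖⁻¹ • q, k⟫) ≠ 0 := by positivity
  rw [(aux_grad q k hq hc).gradient]
  rw [norm_smul, mul_pow, norm_sub_sq_real, norm_smul, norm_smul, mul_pow, mul_pow]
  simp only [real_inner_smul_left, real_inner_smul_right]
  simp only [norm_inv, norm_norm, Real.norm_eq_abs, inv_pow, sq_abs, hk, one_pow, mul_one,
    abs_norm]
  rw [hcc] at hs hpos
  rw [hs]
  have h0' : ‖q‖ ≠ 0 := ne_of_gt h0
  have hpne : (1 : ℝ) - ‖q‖⁻¹ * ⟪q, k⟫ ≠ 0 := ne_of_gt hpos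
  have hrt : ‖q‖ - ⟪q, k⟫ > 0 := by
    have := mul_pos h0 hpos
    rw [mul_sub] at this
    rw [mul_inv_cancel_left₀ h0'] at this
    linarith
  field_simp
  ring

end Aux2

/-- Clean pairs dominate the noisy-pair robust loss: if `k_j` (clean) and `k_m` (noisy)
are unit vectors with `⟨q̃, k_m⟩ < ⟨q̃, k_j⟩ < 1`, then for
`L̃_r(q; k) = 2√(1 − ⟨q̃, k⟩)` one has
`‖∇_q L̃_r(q; k_m)‖² = (1/‖q‖²)(1 + ⟨q̃, k_m⟩) < (1/‖q‖²)(1 + ⟨q̃, k_j⟩) = ‖∇_q L̃_r(q; k_j)‖²`. -/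
theorem stmt5 {E : Type*} [NormedAddCommGroup E] [InnerProductSpace ℝ E]
    [FiniteDimensional ℝ E] (q kj km : E) (hq : q ≠ 0)
    (hkj : ‖kj‖ = 1) (hkm : ‖km‖ = 1)
    (h1 : ⟪‖q‖⁻¹ • q, km⟫ < ⟪‖q‖⁻¹ • q, kj⟫) (h2 : ⟪‖q‖⁻¹ • q, kj⟫ < 1) :
    ‖gradient (fun p : E => 2 * Real.sqrt (1 - ⟪‖p‖⁻¹ • p, km⟫)) q‖ ^ 2
        = 1 / ‖q‖ ^ 2 * (1 + ⟪‖q‖⁻¹ • q, km⟫) ∧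
      1 / ‖q‖ ^ 2 * (1 + ⟪‖q‖⁻¹ • q, km⟫)
        < 1 / ‖q‖ ^ 2 * (1 + ⟪‖q‖⁻¹ • q, kj⟫) ∧
      1 / ‖q‖ ^ 2 * (1 + ⟪‖q‖⁻¹ • q, kj⟫)
        = ‖gradient (fun p : E => 2 * Real.sqrt (1 - ⟪‖p‖⁻¹ • p, kj⟫)) q‖ ^ 2 := by
  have hcm : ⟪‖q‖⁻¹ • q, km⟫ < 1 := lt_trans h1 h2
  refine ⟨aux_norm_sq q km hq hkm hcm, ?_, (aux_norm_sq q kj hq hkj h2).symm⟩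
  have h0 : (0:ℝ) < ‖q‖ := norm_pos_iff.mpr hq
  have : (0:ℝ) < 1 / ‖q‖ ^ 2 := by positivity
  exact mul_lt_mul_of_pos_left (by linarith) this
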